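/- The maps E_d(m) : G(m) → G(n), (ℓ,x,y) ↦ (ℓ^d, μ_{m,n}(x), ν̂_{m,n}(y)); H_d(n) : G(n) → G(m), (ℓ,x,y) ↦ (ℓ^d, ν_{n,m}(x), μ̂_{n,m}(y)); and D_d(m) : G(m) → G(m), (ℓ,x,y) ↦ (ℓ^{d²}, d·x, d·y) are group homomorphisms of Heisenberg groups, and they satisfy H_d(n) ∘ E_d(m) = D_d(m) and E_d(m) ∘ H_d(n) = D_d(n). -/

import Mathlib

namespace ThetaPaper

variable {g n : ℕ} {k : Type*} [Field k]

/-- `Z(n) = (ℤ/nℤ)^g`. -/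
abbrev ZGrp (g n : ℕ) := Fin g → ZMod n

/-- `Ẑ(n) = Hom(Z(n), kˣ)`, the group of `kˣ`-valued characters of `Z(n)`,
written additively. -/
abbrev ZHat (g n : ℕ) (k : Type*) [Field k] := AddChar (ZGrp g n) kˣ

/-- `K(n) = Z(n) × Ẑ(n)`. -/
abbrev KGrp (g n : ℕ) (k : Type*) [Field k] := ZGrp g n × ZHat g n k

/-- The commutator pairing `e_n((x₁,y₁),(x₂,y₂)) = y₁(x₂)·y₂(x₁)⁻¹`. -/
def en (v w : KGrp g n k) : kˣ := v.2 w.1 * (w.2 v.1)⁻¹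

/-- The level-`n` Heisenberg group `G(n)`, as the set `kˣ × Z(n) × Ẑ(n)`. -/
@[ext]
structure Heis (g n : ℕ) (k : Type*) [Field k] where
  t : kˣ
  x : ZGrp g n
  y : ZHat g n k

namespace Heis

/-- The Heisenberg multiplication
`(α₁,x₁,y₁)·(α₂,x₂,y₂) = (α₁α₂·y₂(x₁), x₁+x₂, y₁+y₂)`. -/
instance : Mul (Heis g n k) :=
  ⟨fun a b => ⟨a.t * b.t * b.y a.x, a.x + b.x, a.y + b.y⟩⟩

instance : One (Heis g n k) := ⟨⟨1, 0, 0⟩⟩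

instance : Inv (Heis g n k) :=
  ⟨fun a => ⟨a.t⁻¹ * a.y a.x, -a.x, -a.y⟩⟩

@[simp] lemma mul_t (a b : Heis g n k) : (a * b).t = a.t * b.t * b.y a.x := rfl
@[simp] lemma mul_x (a b : Heis g n k) : (a * b).x = a.x + b.x := rfl
@[simp] lemma mul_y (a b : Heis g n k) : (a * b).y = a.y + b.y := rfl
@[simp] lemma one_t : (1 : Heis g n k).t = 1 := rfl
@[simp] lemma one_x : (1 : Heis g n k).x = 0 := rfl
@[simp] lemma one_y : (1 : Heis g n k).y = 0 := rfl
@[simp] lemma inv_t (a : Heis g n k) : a⁻¹.t = a.t⁻¹ * a.y a.x := rfl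
@[simp] lemma inv_x (a : Heis g n k) : a⁻¹.x = -a.x := rfl
@[simp] lemma inv_y (a : Heis g n k) : a⁻¹.y = -a.y := rfl

instance : Group (Heis g n k) :=
  Group.ofLeftAxioms
    (fun a b c => by
      ext <;>
        simp [AddChar.map_add_eq_mul, mul_assoc, mul_comm, mul_left_comm, add_assoc])
    (fun a => by ext <;> simp)
    (fun a => by
      ext <;> simp [AddChar.map_neg_eq_inv, mul_comm, mul_left_comm, mul_assoc])

/-- The canonical projection `π : G(n) → K(n)`, `(α,x,y) ↦ (x,y)`. -/
def toK (h : Heis g n k) : KGrp g n k := (h.x, h.y)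

/-- The automorphism `D₋₁ : (α,x,y) ↦ (α,−x,−y)`. -/
def Dneg (h : Heis g n k) : Heis g n k := ⟨h.t, -h.x, -h.y⟩

/-- A symmetric element of the Heisenberg group: `D₋₁(h) = h⁻¹`. -/
def IsSymElem (h : Heis g n k) : Prop := Dneg h = h⁻¹

end Heis

/-- The `ψ`-semi-character identity:
`χ(v+w) = χ(v)·χ(w)·[ψ(w)₂(ψ(v)₁)]·[w₂(v₁)]⁻¹`. -/
def IsSemiChar (ψ : KGrp g n k → KGrp g n k) (χ : KGrp g n k → kˣ) : Prop :=
  ∀ v w : KGrp g n k,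
    χ (v + w) = χ v * χ w * (ψ w).2 (ψ v).1 * ((w.2 v.1)⁻¹ : kˣ)

/-- A symmetric (semi-)character: `χ(−v) = χ(v)`. -/
def IsSymmChar (χ : KGrp g n k → kˣ) : Prop := ∀ v : KGrp g n k, χ (-v) = χ v

/-- `ψ̄ ∈ Sp(K(n))`: an additive automorphism preserving the pairing `e_n`. -/
def IsSymplectic (ψ : KGrp g n k ≃+ KGrp g n k) : Prop :=
  ∀ v w : KGrp g n k, en (ψ v) (ψ w) = en v w


/-- `μ` on one coordinate: the canonical injection `(1/m)ℤ/ℤ → (1/n)ℤ/ℤ`,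
which in `ℤ/Nℤ` (numerator) coordinates is the additive map `ℤ/mℤ → ℤ/nℤ`
sending `1` to `d`. -/
def muZMod (m n d : ℕ) (hmd : n = m * d) : ZMod m →+ ZMod n :=
  ZMod.lift m ⟨zmultiplesHom (ZMod n) (d : ZMod n), by
    simp only [zmultiplesHom_apply]
    rw [zsmul_eq_mul]
    push_cast
    rw [← Nat.cast_mul, ← hmd, ZMod.natCast_self]⟩

/-- `ν` on one coordinate: the map `(1/n)ℤ/ℤ → (1/m)ℤ/ℤ`, `x ↦ d·x`, which in
numerator coordinates is reduction `ℤ/nℤ → ℤ/mℤ`. -/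
def nuZMod (m n d : ℕ) (hmd : n = m * d) : ZMod n →+ ZMod m :=
  (ZMod.castHom ⟨d, hmd⟩ (ZMod m)).toAddMonoidHom

/-- The canonical injection `μ_{m,n} : Z(m) → Z(n)`. -/
def muMap (g m n d : ℕ) (hmd : n = m * d) : ZGrp g m →+ ZGrp g n :=
  (muZMod m n d hmd).compLeft (Fin g)

/-- The surjection `ν_{n,m} : Z(n) → Z(m)`, `x ↦ d·x`. -/
def nuMap (g m n d : ℕ) (hmd : n = m * d) : ZGrp g n →+ ZGrp g m :=
  (nuZMod m n d hmd).compLeft (Fin g)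

/-- `ν̂_{m,n} : Ẑ(m) → Ẑ(n)`, the dual of `ν_{n,m}`: `ν̂_{m,n}(y)(x) = y(ν_{n,m}(x))`. -/
def nuHat (g m n d : ℕ) (k : Type*) [Field k] (hmd : n = m * d) (y : ZHat g m k) :
    ZHat g n k :=
  y.compAddMonoidHom (nuMap g m n d hmd)

/-- `μ̂_{n,m} : Ẑ(n) → Ẑ(m)`, the dual of `μ_{m,n}` (restriction of characters). -/
def muHat (g m n d : ℕ) (k : Type*) [Field k] (hmd : n = m * d) (y : ZHat g n k) :
    ZHat g m k :=
  y.compAddMonoidHom (muMap g m n d hmd)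

/-- `E_d(m) : G(m) → G(n)`, `(ℓ,x,y) ↦ (ℓ^d, μ_{m,n}(x), ν̂_{m,n}(y))`. -/
def Emap (g m n d : ℕ) (k : Type*) [Field k] (hmd : n = m * d) (h : Heis g m k) :
    Heis g n k :=
  ⟨h.t ^ d, muMap g m n d hmd h.x, nuHat g m n d k hmd h.y⟩

/-- `H_d(n) : G(n) → G(m)`, `(ℓ,x,y) ↦ (ℓ^d, ν_{n,m}(x), μ̂_{n,m}(y))`. -/
def Hmap (g m n d : ℕ) (k : Type*) [Field k] (hmd : n = m * d) (h : Heis g n k) :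
    Heis g m k :=
  ⟨h.t ^ d, nuMap g m n d hmd h.x, muHat g m n d k hmd h.y⟩

/-- `D_d(N) : G(N) → G(N)`, `(ℓ,x,y) ↦ (ℓ^{d²}, d·x, d·y)`. -/
def Dmap (g N d : ℕ) (k : Type*) [Field k] (h : Heis g N k) : Heis g N k :=
  ⟨h.t ^ d ^ 2, d • h.x, d • h.y⟩

/-- `E_d(m)`, `H_d(n)` and `D_d(m)` are group homomorphisms of
Heisenberg groups, and `H_d(n) ∘ E_d(m) = D_d(m)`, `E_d(m) ∘ H_d(n) = D_d(n)`. -/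

lemma muZMod_intCast (m n d : ℕ) (hmd : n = m * d) (a : ℤ) :
    muZMod m n d hmd (a : ZMod m) = a * d := by
  rw [muZMod, ZMod.lift_coe]
  simp [zsmul_eq_mul]

lemma nuZMod_intCast (m n d : ℕ) (hmd : n = m * d) (a : ℤ) :
    nuZMod m n d hmd (a : ZMod n) = (a : ZMod m) := by
  simp [nuZMod]

lemma nu_mu (m n d : ℕ) (hmd : n = m * d) (x : ZMod m) :
    nuZMod m n d hmd (muZMod m n d hmd x) = d • x := by
  obtain ⟨a, rfl⟩ := ZMod.intCast_surjective x
  rw [muZMod_intCast, show ((a : ZMod n) * d) = ((a * d : ℤ) : ZMod n) by push_cast; ring,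
    nuZMod_intCast]
  push_cast
  ring

lemma mu_nu (m n d : ℕ) (hmd : n = m * d) (x : ZMod n) :
    muZMod m n d hmd (nuZMod m n d hmd x) = d • x := by
  obtain ⟨a, rfl⟩ := ZMod.intCast_surjective x
  rw [nuZMod_intCast, muZMod_intCast]
  push_cast
  ring

lemma nuMap_muMap (g m n d : ℕ) (hmd : n = m * d) (x : ZGrp g m) :
    nuMap g m n d hmd (muMap g m n d hmd x) = d • x := by
  funext i
  exact nu_mu m n d hmd (x i)

lemma char_const_mul {N : ℕ} (y : ZHat g N k) (dd : ℕ) (x : ZGrp g N) :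
    y ((fun _ => (dd : ZMod N)) * x) = y x ^ dd := by
  have h : (fun _ => (dd : ZMod N)) * x = dd • x := by
    funext i
    simp [nsmul_eq_mul]
  rw [h, AddChar.map_nsmul_eq_pow]

lemma char_natCast_mul {N : ℕ} (y : ZHat g N k) (dd : ℕ) (x : ZGrp g N) :
    y ((dd : ZGrp g N) * x) = y x ^ dd := by
  rw [← nsmul_eq_mul, AddChar.map_nsmul_eq_pow]

lemma muMap_nuMap (g m n d : ℕ) (hmd : n = m * d) (x : ZGrp g n) :
    muMap g m n d hmd (nuMap g m n d hmd x) = d • x := by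
  funext i
  exact mu_nu m n d hmd (x i)

theorem Emap_Hmap_Dmap_hom_and_comp (g m n d : ℕ) (hg : 1 ≤ g)
    (hm : 1 < m) (hn : 1 < n) (hd : 1 < d) (hmd : n = m * d)
    (k : Type*) [Field k] :
    (∀ a b : Heis g m k,
      Emap g m n d k hmd (a * b) = Emap g m n d k hmd a * Emap g m n d k hmd b) ∧
    (∀ a b : Heis g n k,
      Hmap g m n d k hmd (a * b) = Hmap g m n d k hmd a * Hmap g m n d k hmd b) ∧
    (∀ a b : Heis g m k,
      Dmap g m d k (a * b) = Dmap g m d k a * Dmap g m d k b) ∧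
    (∀ a : Heis g m k, Hmap g m n d k hmd (Emap g m n d k hmd a) = Dmap g m d k a) ∧
    (∀ a : Heis g n k, Emap g m n d k hmd (Hmap g m n d k hmd a) = Dmap g n d k a) := by
  refine ⟨?_, ?_, ?_, ?_, ?_⟩
  · intro a b
    ext <;> simp [Emap, nuHat, nuMap_muMap, char_const_mul, char_natCast_mul, AddChar.map_nsmul_eq_pow, mul_pow,
      AddChar.compAddMonoidHom]
  · intro a b
    ext <;> simp [Hmap, muHat, muMap_nuMap, char_const_mul, char_natCast_mul, AddChar.map_nsmul_eq_pow, mul_pow,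
      AddChar.compAddMonoidHom]
  · intro a b
    ext <;> simp [Dmap, mul_pow, char_const_mul, char_natCast_mul, AddChar.map_nsmul_eq_pow, sq, pow_mul, mul_nsmul]
  · intro a
    ext <;> simp [Emap, Hmap, Dmap, nuHat, muHat, nuMap_muMap, char_const_mul, char_natCast_mul, sq, pow_mul,
      AddChar.ext_iff, AddChar.map_nsmul_eq_pow]
  · intro a
    ext <;> simp [Emap, Hmap, Dmap, nuHat, muHat, muMap_nuMap, char_const_mul, char_natCast_mul, sq, pow_mul,
      AddChar.ext_iff, AddChar.map_nsmul_eq_pow]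

end ThetaPaper
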